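/- Let (.|.) be a nonzero skew-symmetric bilinear form on a two-dimensional vector space V, and for u,v ∈ V define γ_{u,v} = (u|·)v + (v|·)u. Then for any traceless endomorphism f of V and any u,v ∈ V, [f, γ_{u,v}] = γ_{f(u),v} + γ_{u,f(v)}. -/

import Mathlib

/-- `γ_{u,v} : w ↦ (u|w)v + (v|w)u`. -/
noncomputable def gammaMap {F : Type*} [Field F] {V : Type*} [AddCommGroup V] [Module F V]
    (B : V →ₗ[F] V →ₗ[F] F) (u v : V) : V →ₗ[F] V :=
  (B u).smulRight v + (B v).smulRight u

theorem bracket_with_gamma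
    (F : Type*) [Field F] (h2 : (2 : F) ≠ 0)
    (V : Type*) [AddCommGroup V] [Module F V] [FiniteDimensional F V]
    (hdim : Module.finrank F V = 2)
    (B : V →ₗ[F] V →ₗ[F] F)
    (halt : ∀ v : V, B v v = 0)
    (hne : B ≠ 0)
    (f : V →ₗ[F] V)
    (hf : LinearMap.trace F V f = 0)
    (u v : V) :
    f ∘ₗ gammaMap B u v - gammaMap B u v ∘ₗ f
      = gammaMap B (f u) v + gammaMap B u (f v) := by
  have skew : ∀ x y : V, B x y = - B y x := by
    intro x y
    have h := halt (x + y)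
    simp only [map_add, LinearMap.add_apply, halt] at h
    linear_combination h
  obtain ⟨x, hx⟩ : ∃ x, B x ≠ 0 := by
    by_contra h; push_neg at h; exact hne (LinearMap.ext h)
  obtain ⟨y, hy⟩ : ∃ y, B x y ≠ 0 := by
    by_contra h; push_neg at h; exact hx (LinearMap.ext h)
  set e1 : V := x with he1
  set e2 : V := (B x y)⁻¹ • y with he2
  have hB12 : B e1 e2 = 1 := by
    simp [he2, map_smul, inv_mul_cancel₀ hy]
    exact inv_mul_cancel₀ hy
  have hB21 : B e2 e1 = -1 := by rw [skew, hB12]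
  have hB11 : B e1 e1 = 0 := halt e1
  have hB22 : B e2 e2 = 0 := halt e2
  have hli : LinearIndependent F ![e1, e2] := by
    rw [LinearIndependent.pair_iff]
    intro s t hst
    have h1 := congrArg (fun z => B z e2) hst
    have h2 := congrArg (fun z => B z e1) hst
    simp [map_add, map_smul, hB12, hB21, hB11, hB22] at h1 h2
    exact ⟨h1, h2⟩
  have hcard : Fintype.card (Fin 2) = Module.finrank F V := by simp [hdim]
  let b : Module.Basis (Fin 2) F V := basisOfLinearIndependentOfCardEqFinrank hli hcard
  have hb0 : b 0 = e1 := by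
    simp [b, coe_basisOfLinearIndependentOfCardEqFinrank]
  have hb1 : b 1 = e2 := by
    simp [b, coe_basisOfLinearIndependentOfCardEqFinrank]
  set a : F := b.repr (f e1) 0 with ha
  set c : F := b.repr (f e1) 1 with hc
  set bb : F := b.repr (f e2) 0 with hbb
  set d : F := b.repr (f e2) 1 with hd
  have hfe1 : f e1 = a • e1 + c • e2 := by
    have := b.sum_repr (f e1)
    rw [Fin.sum_univ_two, hb0, hb1] at this
    exact this.symm
  have hfe2 : f e2 = bb • e1 + d • e2 := by
    have := b.sum_repr (f e2)
    rw [Fin.sum_univ_two, hb0, hb1] at this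
    exact this.symm
  have htr : a + d = 0 := by
    have h := LinearMap.trace_eq_matrix_trace F b f
    rw [hf] at h
    rw [Matrix.trace] at h
    simp [Fin.sum_univ_two, Matrix.diag, LinearMap.toMatrix_apply, hb0, hb1] at h
    rw [← ha, ← hd] at h
    exact h.symm
  have key : ∀ p q : V, B (f p) q = - B p (f q) := by
    intro p q
    have hp := b.sum_repr p
    have hq := b.sum_repr q
    rw [Fin.sum_univ_two, hb0, hb1] at hp hq
    set p1 := b.repr p 0; set p2 := b.repr p 1
    set q1 := b.repr q 0; set q2 := b.repr q 1
    rw [← hp, ← hq]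
    simp only [map_add, map_smul, LinearMap.add_apply, LinearMap.smul_apply,
      LinearMap.map_add, LinearMap.map_smul, hfe1, hfe2,
      hB11, hB12, hB21, hB22, smul_eq_mul]
    ring_nf
    linear_combination (p1 * q2 - p2 * q1) * htr
  ext w
  simp only [gammaMap, LinearMap.sub_apply, LinearMap.add_apply, LinearMap.comp_apply,
    LinearMap.coe_sum, LinearMap.smulRight_apply, map_add, map_smul]
  rw [key u w, key v w]
  module
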